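/- Let p be a prime, n an even positive integer, and t ∈ F_{p^n}. The equation x + x^p = t has a solution in F_{p^n} if and only if the sum Σ_{i even, 0 ≤ i ≤ n-2} t^{p^i} lies in F_p; and when it has solutions, it has exactly p solutions. -/

import Mathlib

open Finset Polynomial

private lemma rootcount {K : Type} [Field K] [Fintype K] [DecidableEq K]
    (P : Polynomial K) (hP : P ≠ 0) :
    (univ.filter (fun x => P.eval x = 0)).card ≤ P.natDegree := by
  calc (univ.filter (fun x => P.eval x = 0)).card ≤ P.roots.toFinset.card := by
        apply card_le_card
        intro x hx
        simp only [mem_filter] at hx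
        simp [Multiset.mem_toFinset, mem_roots, hP, hx.2, IsRoot]
    _ ≤ Multiset.card P.roots := P.roots.toFinset_card_le
    _ ≤ P.natDegree := P.card_roots'

private lemma sum_range_two_mul {M : Type*} [AddCommMonoid M] (m : ℕ) (f : ℕ → M) :
    ∑ j ∈ Finset.range (2*m), f j = ∑ i ∈ Finset.range m, (f (2*i) + f (2*i+1)) := by
  induction m with
  | zero => simp
  | succ k ih =>
    have h2 : 2*(k+1) = (2*k+1)+1 := by ring
    rw [h2]
    rw [Finset.sum_range_succ (n := 2*k+1), Finset.sum_range_succ (n := 2*k),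
      Finset.sum_range_succ (n := k), ← ih, add_assoc]

theorem stmt10 (p n : ℕ) (hp : p.Prime) (hn : Even n) (hn0 : 0 < n)
    (K : Type) [Field K] [Fintype K] [DecidableEq K]
    (hcard : Fintype.card K = p ^ n) (t : K) :
    ((∃ x : K, x + x ^ p = t) ↔
      ∃ c : ℕ, (∑ i ∈ Finset.range (n / 2), t ^ (p ^ (2 * i))) = (c : K)) ∧
    ((∃ x : K, x + x ^ p = t) →
      (Finset.univ.filter (fun x : K => x + x ^ p = t)).card = p) := by
  haveI hPF : Fact p.Prime := ⟨hp⟩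
  haveI cp : CharP K p := by
    obtain ⟨m, hq, hc⟩ := FiniteField.card K (ringChar K)
    have h1 : ringChar K ∣ p ^ n := by rw [← hcard, hc]; exact dvd_pow_self _ m.2.ne'
    have : ringChar K = p := (Nat.prime_dvd_prime_iff_eq hq hp).mp (hq.dvd_of_dvd_pow h1)
    rw [← this]; exact ringChar.charP K
  have hne : n % 2 = 0 := Nat.even_iff.mp hn
  obtain ⟨m, rfl⟩ : ∃ m, n = 2 * m := ⟨n / 2, by omega⟩
  rw [show 2 * m / 2 = m from by omega]
  have hm1 : 1 ≤ m := by omega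
  have hp1 : 1 ≤ p := hp.one_le
  -- basic facts
  have hφadd : ∀ a b : K, (a + b) + (a + b) ^ p = (a + a ^ p) + (b + b ^ p) := by
    intro a b; rw [add_pow_char]; ring
  set S : K → K := fun y => ∑ i ∈ Finset.range m, y ^ p ^ (2 * i) with hSdef
  have hSfrob : ∀ y : K, S y ^ p = ∑ i ∈ Finset.range m, y ^ p ^ (2 * i + 1) := by
    intro y
    rw [hSdef]
    rw [sum_pow_char]
    refine Finset.sum_congr rfl fun i _ => ?_
    rw [← pow_mul, ← pow_succ]
  have htr : ∀ x : K, S (x + x ^ p) = ∑ j ∈ Finset.range (2 * m), x ^ p ^ j := by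
    intro x
    rw [sum_range_two_mul]
    refine Finset.sum_congr rfl fun i _ => ?_
    rw [add_pow_char_pow, ← pow_mul, ← pow_succ']
  have hTfix : ∀ x : K, (∑ j ∈ Finset.range (2 * m), x ^ p ^ j) ^ p
      = ∑ j ∈ Finset.range (2 * m), x ^ p ^ j := by
    intro x
    rw [sum_pow_char]
    have hstep : ∀ j, (x ^ p ^ j) ^ p = x ^ p ^ (j + 1) := by
      intro j; rw [← pow_mul, ← pow_succ]
    have hx : x ^ p ^ (2 * m) = x := by rw [← hcard]; exact FiniteField.pow_card x
    have h1 := Finset.sum_range_succ' (fun j => x ^ p ^ j) (2 * m)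
    have h2 := Finset.sum_range_succ (fun j => x ^ p ^ j) (2 * m)
    rw [Finset.sum_congr rfl fun j _ => hstep j]
    have := h1.symm.trans h2
    simp only [pow_zero, pow_one, hx] at this
    exact add_right_cancel this
  -- key additive subsets
  set ker : Finset K := univ.filter (fun x : K => x + x ^ p = 0) with hkerdef
  set Z : Finset K := univ.filter (fun y : K => S y ^ p = S y) with hZdef
  set im : Finset K := univ.image (fun x : K => x + x ^ p) with himdef
  have him_sub_Z : im ⊆ Z := by
    intro y hy
    rw [himdef, Finset.mem_image] at hy
    obtain ⟨x, -, rfl⟩ := hy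
    rw [hZdef, Finset.mem_filter]
    exact ⟨Finset.mem_univ _, by rw [htr x, hTfix x]⟩
  -- kernel bound
  have hXXne : (X ^ p + X ^ 1 : Polynomial K) ≠ 0 := by
    intro h0
    have := congrArg (fun q : Polynomial K => q.coeff p) h0
    simp only [coeff_add, coeff_X_pow, if_pos rfl, coeff_zero] at this
    rw [if_neg (hp.ne_one : ¬ p = 1)] at this
    simp at this
  have hker_le : ker.card ≤ p := by
    have h := rootcount _ hXXne
    refine le_trans (le_trans (Finset.card_le_card ?_) h) ?_
    · intro x hx
      rw [hkerdef, Finset.mem_filter] at hx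
      simp only [Finset.mem_filter, Finset.mem_univ, true_and, eval_add, eval_pow, eval_X,
        pow_one]
      rw [add_comm]; exact hx.2
    · refine le_trans (natDegree_add_le _ _) ?_
      simp only [natDegree_X_pow]
      exact max_le le_rfl hp1
  -- Z bound
  have hinj : Function.Injective (fun k : ℕ => p ^ k) := Nat.pow_right_injective hp.two_le
  set P : Polynomial K := ∑ i ∈ Finset.range m, (X ^ p ^ (2 * i + 1) - X ^ p ^ (2 * i))
    with hPdef
  have hPeval : ∀ y : K, P.eval y = S y ^ p - S y := by
    intro y
    rw [hSfrob, hSdef, hPdef]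
    simp only [eval_finset_sum, eval_sub, eval_pow, eval_X]
    rw [Finset.sum_sub_distrib]
  have hPne : P ≠ 0 := by
    have hc : P.coeff (p ^ (2 * m - 1)) = 1 := by
      rw [hPdef, finset_sum_coeff]
      simp only [coeff_sub, coeff_X_pow]
      have key : ∀ i ∈ Finset.range m,
          ((if p ^ (2 * m - 1) = p ^ (2 * i + 1) then (1 : K) else 0)
            - (if p ^ (2 * m - 1) = p ^ (2 * i) then 1 else 0))
          = if i = m - 1 then 1 else 0 := by
        intro i hi
        rw [Finset.mem_range] at hi
        have h1 : (p ^ (2 * m - 1) = p ^ (2 * i + 1)) ↔ (i = m - 1) := by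
          constructor
          · intro h; have := hinj h; omega
          · intro h; subst h; congr 1; omega
        have h2 : ¬ (p ^ (2 * m - 1) = p ^ (2 * i)) := by
          intro h; have := hinj h; omega
        rw [if_neg h2, sub_zero]
        by_cases hcase : i = m - 1
        · rw [if_pos (h1.mpr hcase), if_pos hcase]
        · rw [if_neg (fun h => hcase (h1.mp h)), if_neg hcase]
      rw [Finset.sum_congr rfl key, Finset.sum_ite_eq' (Finset.range m) (m - 1)]
      rw [if_pos (Finset.mem_range.mpr (by omega))]
    intro h0
    rw [h0, coeff_zero] at hc
    exact one_ne_zero hc.symm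
  have hPdeg : P.natDegree ≤ p ^ (2 * m - 1) := by
    rw [hPdef]
    refine Polynomial.natDegree_sum_le_of_forall_le _ _ fun i hi => ?_
    rw [Finset.mem_range] at hi
    refine le_trans (natDegree_sub_le _ _) ?_
    simp only [natDegree_X_pow]
    have hle1 : p ^ (2 * i + 1) ≤ p ^ (2 * m - 1) :=
      Nat.pow_le_pow_right hp1 (by omega)
    have hle2 : p ^ (2 * i) ≤ p ^ (2 * m - 1) :=
      Nat.pow_le_pow_right hp1 (by omega)
    exact max_le hle1 hle2
  have hZ_le : Z.card ≤ p ^ (2 * m - 1) := by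
    refine le_trans (le_trans (Finset.card_le_card ?_) (rootcount P hPne)) hPdeg
    intro y hy
    rw [hZdef, Finset.mem_filter] at hy
    simp only [Finset.mem_filter, Finset.mem_univ, true_and]
    rw [hPeval, sub_eq_zero]
    exact hy.2
  -- fibers
  have hfiber : ∀ x0 : K, univ.filter (fun x : K => x + x ^ p = x0 + x0 ^ p)
      = ker.image (fun k => x0 + k) := by
    intro x0
    ext y
    simp only [Finset.mem_filter, Finset.mem_univ, true_and, Finset.mem_image]
    constructor
    · intro hy
      refine ⟨y - x0, ?_, by ring⟩
      rw [hkerdef, Finset.mem_filter]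
      refine ⟨Finset.mem_univ _, ?_⟩
      have h := hφadd (y - x0) x0
      rw [sub_add_cancel] at h
      linear_combination hy - h
    · rintro ⟨k, hk, rfl⟩
      rw [hkerdef, Finset.mem_filter] at hk
      rw [hφadd, hk.2, add_zero]
  have hcard_fiber : ∀ x0 : K,
      (univ.filter (fun x : K => x + x ^ p = x0 + x0 ^ p)).card = ker.card := by
    intro x0
    rw [hfiber x0, Finset.card_image_of_injective _ (add_right_injective x0)]
  have him_ker : im.card * ker.card = p ^ (2 * m) := by
    have hsum : (univ : Finset K).card
        = ∑ y ∈ im, (univ.filter (fun x : K => x + x ^ p = y)).card :=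
      Finset.card_eq_sum_card_fiberwise fun x _ => Finset.mem_image_of_mem _ (Finset.mem_univ x)
    have : ∑ y ∈ im, (univ.filter (fun x : K => x + x ^ p = y)).card
        = ∑ _y ∈ im, ker.card := by
      refine Finset.sum_congr rfl fun y hy => ?_
      rw [himdef, Finset.mem_image] at hy
      obtain ⟨x0, -, rfl⟩ := hy
      exact hcard_fiber x0
    rw [← hcard, ← Finset.card_univ, hsum, this, Finset.sum_const, smul_eq_mul]
  have h1 : p ^ (2 * m) ≤ im.card * p := by
    rw [← him_ker]
    exact Nat.mul_le_mul_left _ hker_le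
  have h2 : p ^ (2 * m - 1) ≤ im.card := by
    have h3 : p ^ (2 * m - 1) * p ≤ im.card * p := by
      rw [← pow_succ, show 2 * m - 1 + 1 = 2 * m from by omega]
      exact h1
    exact Nat.le_of_mul_le_mul_right h3 hp.pos
  have him_card : im.card = p ^ (2 * m - 1) :=
    le_antisymm (le_trans (Finset.card_le_card him_sub_Z) hZ_le) h2
  have hker_card : ker.card = p := by
    have hppos : 0 < p ^ (2 * m - 1) := Nat.pow_pos hp.pos
    have heq : p ^ (2 * m - 1) * ker.card = p ^ (2 * m - 1) * p := by
      calc p ^ (2 * m - 1) * ker.card = im.card * ker.card := by rw [him_card]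
        _ = p ^ (2 * m) := him_ker
        _ = p ^ (2 * m - 1) * p := by
            rw [← pow_succ, show 2 * m - 1 + 1 = 2 * m from by omega]
    exact Nat.eq_of_mul_eq_mul_left hppos heq
  have hZ_eq : im = Z :=
    Finset.eq_of_subset_of_card_le him_sub_Z (by rw [him_card]; exact hZ_le)
  -- prime field characterization
  set f : ZMod p →+* K := ZMod.castHom (dvd_refl p) K with hfdef
  have hfc : ∀ c : ℕ, ((c : K)) ^ p = (c : K) := by
    intro c
    have h1 : f (c : ZMod p) = (c : K) := map_natCast f c
    rw [← h1, ← map_pow, ZMod.pow_card]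
  set R : Finset K := univ.filter (fun y : K => y ^ p = y) with hRdef
  have hcast_R : (Finset.range p).image (Nat.cast : ℕ → K) ⊆ R := by
    intro y hy
    rw [Finset.mem_image] at hy
    obtain ⟨c, -, rfl⟩ := hy
    rw [hRdef, Finset.mem_filter]
    exact ⟨Finset.mem_univ _, hfc c⟩
  have hYYne : (X ^ p - X ^ 1 : Polynomial K) ≠ 0 := by
    intro h0
    have := congrArg (fun q : Polynomial K => q.coeff p) h0
    simp only [coeff_sub, coeff_X_pow, if_pos rfl, coeff_zero] at this
    rw [if_neg (hp.ne_one : ¬ p = 1)] at this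
    simp at this
  have hR_le : R.card ≤ p := by
    have h := rootcount _ hYYne
    refine le_trans (le_trans (Finset.card_le_card ?_) h) ?_
    · intro y hy
      rw [hRdef, Finset.mem_filter] at hy
      simp only [Finset.mem_filter, Finset.mem_univ, true_and, eval_sub, eval_pow, eval_X,
        pow_one]
      rw [sub_eq_zero]; exact hy.2
    · refine le_trans (natDegree_sub_le _ _) ?_
      simp only [natDegree_X_pow]
      exact max_le le_rfl hp1
  have hcast_card : ((Finset.range p).image (Nat.cast : ℕ → K)).card = p := by
    rw [Finset.card_image_of_injOn, Finset.card_range]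
    intro a ha b hb hab
    rw [Finset.coe_range, Set.mem_Iio] at ha hb
    have h1 : f (a : ZMod p) = f (b : ZMod p) := by rwa [map_natCast, map_natCast]
    have h2 : (a : ZMod p) = (b : ZMod p) := f.injective h1
    calc a = (a : ZMod p).val := (ZMod.val_cast_of_lt ha).symm
      _ = (b : ZMod p).val := by rw [h2]
      _ = b := ZMod.val_cast_of_lt hb
  have hR_eq : (Finset.range p).image (Nat.cast : ℕ → K) = R :=
    Finset.eq_of_subset_of_card_le hcast_R (by rw [hcast_card]; exact hR_le)
  -- assembling
  constructor
  · constructor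
    · rintro ⟨x, hx⟩
      have htZ : t ∈ Z := by
        rw [← hZ_eq, himdef, Finset.mem_image]
        exact ⟨x, Finset.mem_univ x, hx⟩
      rw [hZdef, Finset.mem_filter] at htZ
      have htR : S t ∈ R := by
        rw [hRdef, Finset.mem_filter]
        exact ⟨Finset.mem_univ _, htZ.2⟩
      rw [← hR_eq, Finset.mem_image] at htR
      obtain ⟨c, -, hc⟩ := htR
      exact ⟨c, hc.symm⟩
    · rintro ⟨c, hc⟩
      have htZ : t ∈ Z := by
        rw [hZdef, Finset.mem_filter]
        refine ⟨Finset.mem_univ _, ?_⟩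
        show S t ^ p = S t
        rw [show S t = (c : K) from hc]
        exact hfc c
      rw [← hZ_eq, himdef, Finset.mem_image] at htZ
      obtain ⟨x, -, hx⟩ := htZ
      exact ⟨x, hx⟩
  · rintro ⟨x, hx⟩
    rw [← hx, hcard_fiber x, hker_card]
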